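/- Let ν be a Borel probability measure on a compact metric space X, T : X → X continuous, M ∈ ℕ, and ξ = {A₁,…,A_j} a Borel partition of X with j ≤ M. Then for any positive integers n, ℓ with n ≥ 2ℓ: (1/n) H_ν(⋁_{i=0}^{n−1} T^{−i} ξ) ≤ (1/ℓ) H_{ν_n}(⋁_{i=0}^{ℓ−1} T^{−i} ξ) + (2ℓ/n) log M, where ν_n = (1/n) Σ_{i=0}^{n−1} ν ∘ T^{−i}. -/

import Mathlib

open MeasureTheory
open scoped ENNReal

/-- Shannon entropy of the (at most countable) Borel partition of `X` given by the fibers of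
`P : X → ι`, with respect to the measure `μ`:  `H_μ(P) = Σ_i −μ(P⁻¹{i}) log μ(P⁻¹{i})`. -/
noncomputable def partEnt {X ι : Type*} [MeasurableSpace X] (μ : Measure X) (P : X → ι) : ℝ :=
  ∑' i : ι, Real.negMulLog ((μ (P ⁻¹' {i})).toReal)

/-- The averaged measure `(1/n) Σ_{i=a}^{a+n-1} μ ∘ T^{-i}`. -/
noncomputable def avgMeasure {X : Type*} [MeasurableSpace X] (μ : Measure X) (T : X → X)
    (a n : ℕ) : Measure X :=
  (n : ℝ≥0∞)⁻¹ • ∑ i ∈ Finset.range n, Measure.map (T^[a + i]) μ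

/-- The dynamical join `⋁_{i=0}^{n−1} T^{−i} ξ` of the partition given by the fibers of
`P : X → ι`, encoded as the fibers of the itinerary map `x ↦ (P x, P(Tx), …, P(T^{n−1}x))`. -/
def dynJoin {X ι : Type*} (T : X → X) (P : X → ι) (n : ℕ) : X → (Fin n → ι) :=
  fun x j => P (T^[(j : ℕ)] x)

namespace EntAux
open Real

variable {X ι κ : Type*} [MeasurableSpace X]

lemma jensen {γ : Type*} (t : Finset γ) (w p : γ → ℝ)
    (hw : ∀ i ∈ t, 0 ≤ w i) (hw1 : ∑ i ∈ t, w i = 1) (hp : ∀ i ∈ t, 0 ≤ p i) :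
    ∑ i ∈ t, w i * negMulLog (p i) ≤ negMulLog (∑ i ∈ t, w i * p i) := by
  simpa [smul_eq_mul] using
    concaveOn_negMulLog.le_map_sum hw hw1 (p := p) (fun i hi => hp i hi)

lemma negMulLog_add_le {a b : ℝ} (ha : 0 ≤ a) (hb : 0 ≤ b) :
    negMulLog (a + b) ≤ negMulLog a + negMulLog b := by
  rcases eq_or_lt_of_le ha with h | h
  · simp [← h]
  rcases eq_or_lt_of_le hb with h' | h'
  · simp [← h']
  have l1 : log a ≤ log (a + b) := Real.log_le_log h (by linarith)
  have l2 : log b ≤ log (a + b) := Real.log_le_log h' (by linarith)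
  simp only [negMulLog, neg_mul]
  nlinarith [mul_le_mul_of_nonneg_left l1 ha, mul_le_mul_of_nonneg_left l2 hb]

lemma negMulLog_sum_le {γ : Type*} (t : Finset γ) (p : γ → ℝ) (hp : ∀ i ∈ t, 0 ≤ p i) :
    negMulLog (∑ i ∈ t, p i) ≤ ∑ i ∈ t, negMulLog (p i) := by
  induction t using Finset.cons_induction with
  | empty => simp
  | cons a s ha ih =>
    rw [Finset.sum_cons, Finset.sum_cons]
    have h1 := negMulLog_add_le (hp a (Finset.mem_cons_self _ _))
      (Finset.sum_nonneg fun i hi => hp i (Finset.mem_cons_of_mem hi))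
    exact h1.trans (add_le_add_right (ih fun i hi => hp i (Finset.mem_cons_of_mem hi)) _)

lemma partEnt_eq_sum [Fintype ι] (μ : Measure X) (Q : X → ι) :
    partEnt μ Q = ∑ i, negMulLog ((μ (Q ⁻¹' {i})).toReal) := tsum_fintype _

lemma toReal_le_one (μ : Measure X) [IsProbabilityMeasure μ] (s : Set X) :
    (μ s).toReal ≤ 1 := by
  have := prob_le_one (μ := μ) (s := s)
  simpa using ENNReal.toReal_mono ENNReal.one_ne_top this

lemma partEnt_nonneg [Fintype ι] (μ : Measure X) [IsProbabilityMeasure μ] (Q : X → ι) :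
    0 ≤ partEnt μ Q := by
  rw [partEnt_eq_sum]
  exact Finset.sum_nonneg fun i _ =>
    negMulLog_nonneg ENNReal.toReal_nonneg (toReal_le_one μ _)

lemma toReal_measure_iUnion [Fintype ι] (μ : Measure X) [IsFiniteMeasure μ]
    (s : ι → Set X) (hd : Pairwise (Function.onFun Disjoint s))
    (hm : ∀ i, MeasurableSet (s i)) :
    (μ (⋃ i, s i)).toReal = ∑ i, (μ (s i)).toReal := by
  rw [measure_iUnion hd hm, tsum_fintype, ENNReal.toReal_sum]
  exact fun i _ => measure_ne_top μ _

lemma sum_fiber_toReal [Fintype ι] (μ : Measure X) [IsProbabilityMeasure μ]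
    (Q : X → ι) (hQ : ∀ i, MeasurableSet (Q ⁻¹' {i})) :
    ∑ i, (μ (Q ⁻¹' {i})).toReal = 1 := by
  rw [← toReal_measure_iUnion μ _ ?_ hQ]
  · have : (⋃ i, Q ⁻¹' {i}) = Set.univ := by
      ext x; simp only [Set.mem_iUnion, Set.mem_preimage, Set.mem_singleton_iff,
        Set.mem_univ, iff_true]
      exact ⟨Q x, rfl⟩
    rw [this, measure_univ, ENNReal.toReal_one]
  · intro i j hij
    simp only [Function.onFun, Set.disjoint_left]
    rintro x hx hx'
    exact hij (hx.symm.trans hx')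

lemma partEnt_map [Fintype ι] (μ : Measure X) (f : X → X) (hf : Measurable f)
    (Q : X → ι) (hQ : ∀ i, MeasurableSet (Q ⁻¹' {i})) :
    partEnt (Measure.map f μ) Q = partEnt μ (fun x => Q (f x)) := by
  rw [partEnt_eq_sum, partEnt_eq_sum]
  refine Finset.sum_congr rfl fun i _ => ?_
  rw [Measure.map_apply hf (hQ i)]
  rfl

lemma partEnt_le_log_card [Fintype ι] [Nonempty ι] (μ : Measure X) [IsProbabilityMeasure μ]
    (Q : X → ι) (hQ : ∀ i, MeasurableSet (Q ⁻¹' {i})) :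
    partEnt μ Q ≤ Real.log (Fintype.card ι) := by
  set c : ℝ := (Fintype.card ι : ℝ) with hc
  have hc0 : 0 < c := by
    have := Fintype.card_pos (α := ι)
    positivity
  set p : ι → ℝ := fun i => (μ (Q ⁻¹' {i})).toReal with hp
  have hj := jensen Finset.univ (fun _ => c⁻¹) p
    (fun i _ => by positivity) (by rw [Finset.sum_const, Finset.card_univ, nsmul_eq_mul, hc]; field_simp)
    (fun i _ => ENNReal.toReal_nonneg)
  have hsum : ∑ i, c⁻¹ * p i = c⁻¹ := by
    rw [← Finset.mul_sum, sum_fiber_toReal μ Q hQ, mul_one]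
  rw [hsum] at hj
  have hnm : negMulLog c⁻¹ = c⁻¹ * Real.log c := by
    simp [negMulLog, Real.log_inv]
  rw [hnm, ← Finset.mul_sum] at hj
  rw [partEnt_eq_sum]
  calc ∑ i, negMulLog (p i) = c * (c⁻¹ * ∑ i, negMulLog (p i)) := by field_simp
    _ ≤ c * (c⁻¹ * Real.log c) := by
        refine mul_le_mul_of_nonneg_left hj hc0.le
    _ = Real.log c := by field_simp

lemma fiber_pair (A : X → ι) (B : X → κ) (p : ι × κ) :
    (fun x => (A x, B x)) ⁻¹' {p} = A ⁻¹' {p.1} ∩ B ⁻¹' {p.2} := by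
  ext x; simp [Prod.ext_iff]

lemma fiber_tuple {m : ℕ} (G : Fin m → X → κ) (v : Fin m → κ) :
    (fun x (j : Fin m) => G j x) ⁻¹' {v} = ⋂ j, (G j) ⁻¹' {v j} := by
  ext x
  simp [funext_iff]

lemma partEnt_factor [Fintype ι] [Fintype κ] (μ : Measure X) [IsFiniteMeasure μ]
    (Q : X → ι) (R : X → κ) (g : κ → ι) (hQR : ∀ x, Q x = g (R x))
    (hR : ∀ j, MeasurableSet (R ⁻¹' {j})) :
    partEnt μ Q ≤ partEnt μ R := by
  classical
  rw [partEnt_eq_sum, partEnt_eq_sum]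
  have hmeas : ∀ i : ι, (μ (Q ⁻¹' {i})).toReal
      = ∑ j ∈ Finset.univ.filter (fun j => g j = i), (μ (R ⁻¹' {j})).toReal := by
    intro i
    have hfib : Q ⁻¹' {i} = ⋃ j ∈ Finset.univ.filter (fun j => g j = i), R ⁻¹' {j} := by
      ext x
      simp only [Set.mem_preimage, Set.mem_singleton_iff, Set.mem_iUnion,
        Finset.mem_filter, Finset.mem_univ, true_and, hQR x]
      constructor
      · intro h; exact ⟨R x, h, rfl⟩
      · rintro ⟨j, hj, hx⟩; rw [hx]; exact hj
    rw [hfib, measure_biUnion_finset ?_ (fun j _ => hR j), ENNReal.toReal_sum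
      (fun j _ => measure_ne_top μ _)]
    intro a _ b _ hab
    simp only [Set.disjoint_left]
    rintro x hx hx'
    exact hab (hx.symm.trans hx')
  calc ∑ i, negMulLog ((μ (Q ⁻¹' {i})).toReal)
      ≤ ∑ i, ∑ j ∈ Finset.univ.filter (fun j => g j = i), negMulLog ((μ (R ⁻¹' {j})).toReal) := by
        refine Finset.sum_le_sum fun i _ => ?_
        rw [hmeas i]
        exact negMulLog_sum_le _ _ (fun j _ => ENNReal.toReal_nonneg)
    _ = ∑ j, negMulLog ((μ (R ⁻¹' {j})).toReal) :=
        Finset.sum_fiberwise _ _ _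

lemma partEnt_pair [Fintype ι] [Fintype κ] (μ : Measure X) [IsProbabilityMeasure μ]
    (Q : X → ι) (R : X → κ) (hQ : ∀ i, MeasurableSet (Q ⁻¹' {i}))
    (hR : ∀ j, MeasurableSet (R ⁻¹' {j})) :
    partEnt μ (fun x => (Q x, R x)) ≤ partEnt μ Q + partEnt μ R := by
  classical
  set p : ι → ℝ := fun i => (μ (Q ⁻¹' {i})).toReal with hp
  set q : κ → ℝ := fun j => (μ (R ⁻¹' {j})).toReal with hq
  set r : ι → κ → ℝ := fun i j => (μ (Q ⁻¹' {i} ∩ R ⁻¹' {j})).toReal with hr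
  have hp0 : ∀ i, 0 ≤ p i := fun i => ENNReal.toReal_nonneg
  have hq0 : ∀ j, 0 ≤ q j := fun j => ENNReal.toReal_nonneg
  have hr0 : ∀ i j, 0 ≤ r i j := fun i j => ENNReal.toReal_nonneg
  have hrow : ∀ i, ∑ j, r i j = p i := by
    intro i
    have : Q ⁻¹' {i} = ⋃ j, (Q ⁻¹' {i} ∩ R ⁻¹' {j}) := by
      ext x
      simp only [Set.mem_preimage, Set.mem_singleton_iff, Set.mem_iUnion, Set.mem_inter_iff]
      exact ⟨fun h => ⟨R x, h, rfl⟩, fun ⟨j, hj, _⟩ => hj⟩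
    rw [hp]
    simp only
    rw [this, toReal_measure_iUnion μ _ ?_ (fun j => (hQ i).inter (hR j))]
    intro a b hab
    simp only [Function.onFun, Set.disjoint_left]
    rintro x ⟨_, hx⟩ ⟨_, hx'⟩
    exact hab (hx.symm.trans hx')
  have hcol : ∀ j, ∑ i, r i j = q j := by
    intro j
    have : R ⁻¹' {j} = ⋃ i, (Q ⁻¹' {i} ∩ R ⁻¹' {j}) := by
      ext x
      simp only [Set.mem_preimage, Set.mem_singleton_iff, Set.mem_iUnion, Set.mem_inter_iff]
      exact ⟨fun h => ⟨Q x, rfl, h⟩, fun ⟨i, _, hj⟩ => hj⟩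
    rw [hq]
    simp only
    rw [this, toReal_measure_iUnion μ _ ?_ (fun i => (hQ i).inter (hR j))]
    intro a b hab
    simp only [Function.onFun, Set.disjoint_left]
    rintro x ⟨hx, _⟩ ⟨hx', _⟩
    exact hab (hx.symm.trans hx')
  have hpsum : ∑ i, p i = 1 := sum_fiber_toReal μ Q hQ
  have hqsum : ∑ j, q j = 1 := sum_fiber_toReal μ R hR
  set c : ι → κ → ℝ := fun i j => if p i = 0 then q j else r i j / p i with hcdef
  have hc0 : ∀ i j, 0 ≤ c i j := by
    intro i j
    rw [hcdef]
    simp only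
    split_ifs
    · exact hq0 j
    · exact div_nonneg (hr0 i j) (hp0 i)
  have hcsum : ∀ i, ∑ j, c i j = 1 := by
    intro i
    rw [hcdef]
    simp only
    split_ifs with h
    · exact hqsum
    · rw [← Finset.sum_div, hrow i, div_self h]
  have hrc : ∀ i j, r i j = p i * c i j := by
    intro i j
    rw [hcdef]
    simp only
    split_ifs with h
    · rw [h, zero_mul]
      have : r i j ≤ p i := by
        rw [← hrow i]
        exact Finset.single_le_sum (fun j _ => hr0 i j) (Finset.mem_univ j)
      have := le_antisymm (this.trans_eq h) (hr0 i j)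
      linarith
    · field_simp
  have key : partEnt μ (fun x => (Q x, R x)) = ∑ i, ∑ j, negMulLog (r i j) := by
    rw [partEnt_eq_sum, Fintype.sum_prod_type]
    refine Finset.sum_congr rfl fun i _ => Finset.sum_congr rfl fun j _ => ?_
    have hset : (fun x => (Q x, R x)) ⁻¹' {(i, j)} = Q ⁻¹' {i} ∩ R ⁻¹' {j} := by
      ext x; simp [Prod.ext_iff]
    rw [hr]
    simp only
    rw [hset]
  rw [key, partEnt_eq_sum, partEnt_eq_sum]
  have expand : ∀ i j, negMulLog (r i j) = p i * negMulLog (c i j) + negMulLog (p i) * c i j := by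
    intro i j
    rw [hrc i j, negMulLog_mul]
    ring
  calc ∑ i, ∑ j, negMulLog (r i j)
      = (∑ i, ∑ j, p i * negMulLog (c i j)) + ∑ i, negMulLog (p i) := by
        simp_rw [expand]
        rw [← Finset.sum_add_distrib]
        refine Finset.sum_congr rfl fun i _ => ?_
        rw [Finset.sum_add_distrib]
        congr 1
        rw [← Finset.mul_sum, hcsum i, mul_one]
    _ ≤ (∑ j, negMulLog (q j)) + ∑ i, negMulLog (p i) := by
        refine add_le_add_left ?_ _
        rw [Finset.sum_comm]
        refine Finset.sum_le_sum fun j _ => ?_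
        have hJ := jensen Finset.univ p (fun i => c i j) (fun i _ => hp0 i) hpsum
          (fun i _ => hc0 i j)
        have : ∑ i, p i * c i j = q j := by
          rw [← hcol j]
          exact Finset.sum_congr rfl fun i _ => (hrc i j).symm
        rwa [this] at hJ
    _ = (∑ i, negMulLog (p i)) + ∑ j, negMulLog (q j) := by ring

lemma meas_fiber_tuple {m : ℕ} (G : Fin m → X → κ)
    (hG : ∀ j i, MeasurableSet ((G j) ⁻¹' {i})) (v : Fin m → κ) :
    MeasurableSet ((fun x (j : Fin m) => G j x) ⁻¹' {v}) := by
  rw [fiber_tuple]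
  exact MeasurableSet.iInter fun j => hG j (v j)

lemma partEnt_tuple [Fintype κ] (μ : Measure X) [IsProbabilityMeasure μ] {m : ℕ}
    (G : Fin m → X → κ) (hG : ∀ j i, MeasurableSet ((G j) ⁻¹' {i})) :
    partEnt μ (fun x (j : Fin m) => G j x) ≤ ∑ j, partEnt μ (G j) := by
  induction m with
  | zero =>
    have hfib : ∀ v : Fin 0 → κ, (fun x (j : Fin 0) => G j x) ⁻¹' {v} = Set.univ := by
      intro v
      ext x
      simp only [Set.mem_preimage, Set.mem_singleton_iff, Set.mem_univ, iff_true]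
      exact Subsingleton.elim _ _
    rw [partEnt_eq_sum]
    simp [hfib, measure_univ]
  | succ m ih =>
    have hfac : ∀ x, (fun (j : Fin (m+1)) => G j x)
        = (fun pr : (Fin m → κ) × κ => (Fin.snoc pr.1 pr.2 : Fin (m+1) → κ))
          ((fun k : Fin m => G k.castSucc x), G (Fin.last m) x) := by
      intro x
      funext j
      refine Fin.lastCases ?_ (fun k => ?_) j
      · simp
      · simp
    calc partEnt μ (fun x (j : Fin (m+1)) => G j x)
        ≤ partEnt μ (fun x => ((fun k : Fin m => G k.castSucc x), G (Fin.last m) x)) := by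
          refine partEnt_factor μ _ _ (fun pr : (Fin m → κ) × κ => (Fin.snoc pr.1 pr.2 : Fin (m+1) → κ)) hfac ?_
          rintro ⟨b, a⟩
          have : ((fun x => ((fun k : Fin m => G k.castSucc x), G (Fin.last m) x)) ⁻¹' {(b, a)})
              = ((fun x (k : Fin m) => G k.castSucc x) ⁻¹' {b}) ∩ ((G (Fin.last m)) ⁻¹' {a}) := by
            ext x; simp [Prod.ext_iff]
          rw [this]
          exact (meas_fiber_tuple _ (fun k i => hG k.castSucc i) b).inter (hG _ a)
      _ ≤ partEnt μ (fun x (k : Fin m) => G k.castSucc x) + partEnt μ (G (Fin.last m)) :=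
          partEnt_pair μ _ _ (meas_fiber_tuple _ (fun k i => hG k.castSucc i)) (hG _)
      _ ≤ (∑ k : Fin m, partEnt μ (G k.castSucc)) + partEnt μ (G (Fin.last m)) :=
          add_le_add_left (ih _ (fun k i => hG k.castSucc i)) _
      _ = ∑ j : Fin (m+1), partEnt μ (G j) := (Fin.sum_univ_castSucc (fun j : Fin (m+1) => partEnt μ (G j))).symm

lemma per_block {X : Type*} [MeasurableSpace X] (T : X → X) (hT : Measurable T)
    (ν : Measure X) [IsProbabilityMeasure ν]
    (M : ℕ) [Nonempty (Fin M)] (P : X → Fin M) (hP : ∀ i, MeasurableSet (P ⁻¹' {i}))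
    (n ℓ j : ℕ) (hℓ : 0 < ℓ) (hjℓ : j < ℓ) (hn : 2 * ℓ ≤ n) :
    partEnt ν (dynJoin T P n) ≤
      (∑ k ∈ Finset.range ((n - j) / ℓ),
          partEnt (Measure.map (T^[j + k * ℓ]) ν) (dynJoin T P ℓ))
        + 2 * ℓ * Real.log M := by
  classical
  set m := (n - j) / ℓ with hm
  have hdm : ℓ * m + (n - j) % ℓ = n - j := Nat.div_add_mod _ _
  have hmod : (n - j) % ℓ < ℓ := Nat.mod_lt _ hℓ
  have hjn : j ≤ n := by omega
  have hblock : j + m * ℓ ≤ n := by rw [mul_comm]; omega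
  have htail : n - (j + m * ℓ) < ℓ := by
    have : j + m * ℓ = j + ℓ * m := by rw [mul_comm]
    omega
  -- measurability facts
  have hPs : ∀ (s : ℕ) (i : Fin M), MeasurableSet ((fun x => P (T^[s] x)) ⁻¹' {i}) :=
    fun s i => (hT.iterate s) (hP i)
  have hdynfib : ∀ (m' : ℕ) (v : Fin m' → Fin M), MeasurableSet (dynJoin T P m' ⁻¹' {v}) := by
    intro m' v
    exact meas_fiber_tuple (fun (j' : Fin m') x => P (T^[(j':ℕ)] x)) (fun j' i => hPs _ i) v
  set G : Fin m → X → (Fin ℓ → Fin M) :=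
    fun k x => dynJoin T P ℓ (T^[j + (k:ℕ) * ℓ] x) with hG
  set C : X → (Fin (2 * ℓ) → Fin M) := fun x t =>
    P (T^[if (t:ℕ) < ℓ then (t:ℕ) else j + m * ℓ + ((t:ℕ) - ℓ)] x) with hC
  have hGfib : ∀ (k : Fin m) (v : Fin ℓ → Fin M), MeasurableSet ((G k) ⁻¹' {v}) := by
    intro k v
    have h1 : (G k) ⁻¹' {v} = (T^[j + (k:ℕ)*ℓ]) ⁻¹' (dynJoin T P ℓ ⁻¹' {v}) := rfl
    rw [h1]
    exact (hT.iterate _) (hdynfib ℓ v)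
  have hBfib : ∀ v, MeasurableSet ((fun x (k : Fin m) => G k x) ⁻¹' {v}) :=
    meas_fiber_tuple G hGfib
  have hCfib : ∀ v, MeasurableSet (C ⁻¹' {v}) := by
    intro v
    exact meas_fiber_tuple
      (fun (t : Fin (2*ℓ)) x => P (T^[if (t:ℕ) < ℓ then (t:ℕ) else j + m * ℓ + ((t:ℕ) - ℓ)] x))
      (fun t i => hPs _ i) v
  set g : ((Fin m → (Fin ℓ → Fin M)) × (Fin (2*ℓ) → Fin M)) → (Fin n → Fin M) := fun bc i =>
    if h : j ≤ (i:ℕ) ∧ (i:ℕ) < j + m * ℓ then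
      bc.1 ⟨((i:ℕ) - j) / ℓ, (Nat.div_lt_iff_lt_mul hℓ).mpr (by omega)⟩
        ⟨((i:ℕ) - j) % ℓ, Nat.mod_lt _ hℓ⟩
    else if h' : (i:ℕ) < j then bc.2 ⟨(i:ℕ), by omega⟩
    else bc.2 ⟨ℓ + ((i:ℕ) - (j + m * ℓ)), by omega⟩ with hg
  have hgR : ∀ x, dynJoin T P n x = g ((fun k : Fin m => G k x), C x) := by
    intro x
    funext i
    rw [hg]
    simp only
    split_ifs with h h'
    · -- block case
      show P (T^[(i:ℕ)] x) = dynJoin T P ℓ (T^[j + (((i:ℕ) - j) / ℓ) * ℓ] x)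
        ⟨((i:ℕ) - j) % ℓ, Nat.mod_lt _ hℓ⟩
      rw [dynJoin]
      simp only
      rw [← Function.iterate_add_apply]
      congr 2
      have h1 := Nat.div_add_mod ((i:ℕ) - j) ℓ
      rw [mul_comm (((i:ℕ) - j) / ℓ) ℓ]
      omega
    · -- head remainder
      show P (T^[(i:ℕ)] x) = P (T^[if (i:ℕ) < ℓ then (i:ℕ) else j + m * ℓ + ((i:ℕ) - ℓ)] x)
      rw [if_pos (by omega)]
    · -- tail remainder
      show P (T^[(i:ℕ)] x) = P (T^[if (ℓ + ((i:ℕ) - (j + m*ℓ))) < ℓ then (ℓ + ((i:ℕ) - (j + m*ℓ)))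
        else j + m * ℓ + ((ℓ + ((i:ℕ) - (j + m*ℓ))) - ℓ)] x)
      rw [if_neg (by omega)]
      congr 2
      omega
  have step1 : partEnt ν (dynJoin T P n) ≤ partEnt ν (fun x => ((fun k : Fin m => G k x), C x)) :=
    partEnt_factor ν _ _ g hgR (by
      rintro ⟨b, c⟩
      have h2 : ((fun x => ((fun k : Fin m => G k x), C x)) ⁻¹' {(b, c)})
          = ((fun x (k : Fin m) => G k x) ⁻¹' {b}) ∩ (C ⁻¹' {c}) := by
        ext x; simp [Prod.ext_iff]
      rw [h2]
      exact (hBfib b).inter (hCfib c))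
  have step2 : partEnt ν (fun x => ((fun k : Fin m => G k x), C x))
      ≤ partEnt ν (fun x (k : Fin m) => G k x) + partEnt ν C :=
    partEnt_pair ν _ _ hBfib hCfib
  have step3 : partEnt ν (fun x (k : Fin m) => G k x) ≤ ∑ k : Fin m, partEnt ν (G k) :=
    partEnt_tuple ν G hGfib
  have step4 : ∀ k : Fin m, partEnt ν (G k)
      = partEnt (Measure.map (T^[j + (k:ℕ) * ℓ]) ν) (dynJoin T P ℓ) :=
    fun k => (partEnt_map ν _ (hT.iterate _) _ (hdynfib ℓ)).symm
  have step5 : partEnt ν C ≤ 2 * ℓ * Real.log M := by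
    set F : Fin (2*ℓ) → X → Fin M :=
      fun t x => P (T^[if (t:ℕ) < ℓ then (t:ℕ) else j + m * ℓ + ((t:ℕ) - ℓ)] x) with hF
    have h3 : partEnt ν C ≤ ∑ t : Fin (2*ℓ), partEnt ν (F t) :=
      partEnt_tuple ν F (fun t i => hPs _ i)
    refine h3.trans ?_
    have h4 : ∀ t : Fin (2*ℓ), partEnt ν (F t) ≤ Real.log M := by
      intro t
      have h5 := partEnt_le_log_card ν (F t) (fun i => hPs _ i)
      simpa [Fintype.card_fin] using h5
    have h6 : (∑ t : Fin (2*ℓ), partEnt ν (F t)) ≤ ∑ _t : Fin (2*ℓ), Real.log M :=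
      Finset.sum_le_sum fun t _ => h4 t
    refine h6.trans_eq ?_
    rw [Finset.sum_const, Finset.card_univ, Fintype.card_fin, nsmul_eq_mul]
    push_cast
    ring
  have hsum : ∑ k : Fin m, partEnt (Measure.map (T^[j + (k:ℕ) * ℓ]) ν) (dynJoin T P ℓ)
      = ∑ k ∈ Finset.range m, partEnt (Measure.map (T^[j + k * ℓ]) ν) (dynJoin T P ℓ) :=
    Fin.sum_univ_eq_sum_range (fun k => partEnt (Measure.map (T^[j + k * ℓ]) ν) (dynJoin T P ℓ)) m
  calc partEnt ν (dynJoin T P n)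
      ≤ partEnt ν (fun x (k : Fin m) => G k x) + partEnt ν C := step1.trans step2
    _ ≤ (∑ k : Fin m, partEnt ν (G k)) + 2 * ℓ * Real.log M := add_le_add step3 step5
    _ = (∑ k ∈ Finset.range m, partEnt (Measure.map (T^[j + k * ℓ]) ν) (dynJoin T P ℓ))
        + 2 * ℓ * Real.log M := by
        rw [← hsum]
        congr 1
        exact Finset.sum_congr rfl fun k _ => step4 k
end EntAux

open EntAux Real in
/-- Lemma 5.3 (Lemma 2.4 of [CFH08]): for a Borel probability measure `ν` on a compact metric
space `X`, a continuous `T`, and a Borel partition `ξ` with at most `M` atoms (fibers of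
`P : X → Fin M`), for positive integers `n ≥ 2ℓ`:
`(1/n) H_ν(⋁_{i<n} T^{−i}ξ) ≤ (1/ℓ) H_{ν_n}(⋁_{i<ℓ} T^{−i}ξ) + (2ℓ/n) log M`,
where `ν_n = (1/n) Σ_{i<n} ν ∘ T^{−i}`. -/
theorem stmt7 {X : Type*} [MetricSpace X] [CompactSpace X] [MeasurableSpace X] [BorelSpace X]
    (T : X → X) (hT : Continuous T)
    (ν : Measure X) [IsProbabilityMeasure ν]
    (M : ℕ) (P : X → Fin M) (hP : ∀ i, MeasurableSet (P ⁻¹' {i}))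
    (n ℓ : ℕ) (hℓ : 1 ≤ ℓ) (hn : 2 * ℓ ≤ n) :
    (1 / (n : ℝ)) * partEnt ν (dynJoin T P n) ≤
      (1 / (ℓ : ℝ)) * partEnt (avgMeasure ν T 0 n) (dynJoin T P ℓ)
        + (2 * ℓ / (n : ℝ)) * Real.log M := by
  classical
  have hTm : Measurable T := hT.measurable
  have hX : Nonempty X := by
    by_contra h
    rw [not_nonempty_iff] at h
    have h0 : ν Set.univ = 1 := measure_univ
    rw [Set.univ_eq_empty_iff.mpr h, measure_empty] at h0
    exact zero_ne_one h0
  haveI hMne : Nonempty (Fin M) := ⟨P (Classical.arbitrary X)⟩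
  have hℓ0 : 0 < ℓ := hℓ
  have hn0 : 0 < n := by omega
  have hnR : (0:ℝ) < n := by exact_mod_cast hn0
  have hℓR : (0:ℝ) < ℓ := by exact_mod_cast hℓ0
  have hnne : (n:ℝ) ≠ 0 := hnR.ne'
  have hℓne : (ℓ:ℝ) ≠ 0 := hℓR.ne'
  set f : ℕ → ℝ := fun s => partEnt (Measure.map (T^[s]) ν) (dynJoin T P ℓ) with hfdef
  have hprob : ∀ s : ℕ, IsProbabilityMeasure (Measure.map (T^[s]) ν) :=
    fun s => Measure.isProbabilityMeasure_map (hTm.iterate s).aemeasurable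
  have hfnn : ∀ s, 0 ≤ f s := fun s => by
    haveI := hprob s
    exact partEnt_nonneg _ _
  have hdynfib : ∀ v : Fin ℓ → Fin M, MeasurableSet (dynJoin T P ℓ ⁻¹' {v}) :=
    fun v => meas_fiber_tuple (fun (j' : Fin ℓ) x => P (T^[(j':ℕ)] x))
      (fun j' i => (hTm.iterate _) (hP i)) v
  have perj : ∀ j ∈ Finset.range ℓ, partEnt ν (dynJoin T P n) ≤
      (∑ k ∈ Finset.range ((n - j) / ℓ), f (j + k * ℓ)) + 2 * ℓ * Real.log M :=
    fun j hj => per_block T hTm ν M P hP n ℓ j hℓ0 (Finset.mem_range.mp hj) hn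
  have total : (ℓ:ℝ) * partEnt ν (dynJoin T P n)
      ≤ (∑ j ∈ Finset.range ℓ, ∑ k ∈ Finset.range ((n - j) / ℓ), f (j + k * ℓ))
        + ℓ * (2 * ℓ * Real.log M) := by
    calc (ℓ:ℝ) * partEnt ν (dynJoin T P n)
        = ∑ _j ∈ Finset.range ℓ, partEnt ν (dynJoin T P n) := by
          rw [Finset.sum_const, Finset.card_range, nsmul_eq_mul]
      _ ≤ ∑ j ∈ Finset.range ℓ, ((∑ k ∈ Finset.range ((n - j) / ℓ), f (j + k * ℓ))
            + 2 * ℓ * Real.log M) := Finset.sum_le_sum perj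
      _ = _ := by
          rw [Finset.sum_add_distrib, Finset.sum_const, Finset.card_range, nsmul_eq_mul]
  have inj : (∑ j ∈ Finset.range ℓ, ∑ k ∈ Finset.range ((n - j) / ℓ), f (j + k * ℓ))
      ≤ ∑ s ∈ Finset.range n, f s := by
    rw [Finset.sum_sigma']
    set S := (Finset.range ℓ).sigma (fun j => Finset.range ((n - j) / ℓ)) with hS
    have hinj : ∀ p ∈ S, ∀ q ∈ S,
        (fun p : Σ _j : ℕ, ℕ => p.1 + p.2 * ℓ) p = (fun p : Σ _j : ℕ, ℕ => p.1 + p.2 * ℓ) q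
        → p = q := by
      rintro ⟨j1, k1⟩ hp ⟨j2, k2⟩ hq h
      simp only [hS, Finset.mem_sigma, Finset.mem_range] at hp hq
      simp only at h
      have hj1 : (j1 + k1 * ℓ) % ℓ = j1 := by
        rw [Nat.add_mul_mod_self_right, Nat.mod_eq_of_lt hp.1]
      have hj2 : (j2 + k2 * ℓ) % ℓ = j2 := by
        rw [Nat.add_mul_mod_self_right, Nat.mod_eq_of_lt hq.1]
      have hjj : j1 = j2 := by rw [← hj1, ← hj2, h]
      subst hjj
      have h2 : k1 * ℓ = k2 * ℓ := by omega
      have hkk : k1 = k2 := Nat.eq_of_mul_eq_mul_right hℓ0 h2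
      rw [hkk]
    have himg : ∑ p ∈ S, f (p.1 + p.2 * ℓ)
        = ∑ s ∈ S.image (fun p : Σ _j : ℕ, ℕ => p.1 + p.2 * ℓ), f s :=
      (Finset.sum_image hinj).symm
    rw [himg]
    refine Finset.sum_le_sum_of_subset_of_nonneg ?_ (fun s _ _ => hfnn s)
    intro s hs
    simp only [Finset.mem_image, hS, Finset.mem_sigma, Finset.mem_range] at hs
    obtain ⟨⟨j1, k1⟩, ⟨hj1, hk1⟩, rfl⟩ := hs
    simp only [Finset.mem_range]
    have h6 : (k1 + 1) * ℓ ≤ n - j1 := (Nat.le_div_iff_mul_le hℓ0).mp hk1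
    have h7 : k1 * ℓ + ℓ ≤ n - j1 := by rw [add_mul, one_mul] at h6; omega
    omega
  have conc : (∑ s ∈ Finset.range n, f s)
      ≤ n * partEnt (avgMeasure ν T 0 n) (dynJoin T P ℓ) := by
    have havg : ∀ A : Set X, (avgMeasure ν T 0 n A).toReal
        = ∑ s ∈ Finset.range n, (n:ℝ)⁻¹ * (Measure.map (T^[s]) ν A).toReal := by
      intro A
      rw [avgMeasure, Measure.smul_apply, smul_eq_mul, ENNReal.toReal_mul]
      have h1 : (∑ i ∈ Finset.range n, Measure.map (T^[0 + i]) ν) A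
          = ∑ i ∈ Finset.range n, Measure.map (T^[i]) ν A := by
        rw [Measure.finset_sum_apply]
        simp
      rw [h1, ENNReal.toReal_sum (fun i _ => by
        haveI := hprob i
        exact measure_ne_top _ _), Finset.mul_sum]
      congr 1
      simp [ENNReal.toReal_inv]
    rw [partEnt_eq_sum, Finset.mul_sum]
    have hswap : ∑ s ∈ Finset.range n, f s
        = ∑ v : Fin ℓ → Fin M, ∑ s ∈ Finset.range n,
            negMulLog ((Measure.map (T^[s]) ν (dynJoin T P ℓ ⁻¹' {v})).toReal) := by
      rw [Finset.sum_comm]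
      exact Finset.sum_congr rfl fun s _ => partEnt_eq_sum _ _
    rw [hswap]
    refine Finset.sum_le_sum fun v _ => ?_
    set pv : ℕ → ℝ := fun s => (Measure.map (T^[s]) ν (dynJoin T P ℓ ⁻¹' {v})).toReal with hpv
    have hJ := jensen (Finset.range n) (fun _ => (n:ℝ)⁻¹) pv
      (fun _ _ => by positivity)
      (by rw [Finset.sum_const, Finset.card_range, nsmul_eq_mul]; field_simp)
      (fun _ _ => ENNReal.toReal_nonneg)
    rw [← havg (dynJoin T P ℓ ⁻¹' {v})] at hJ
    calc ∑ s ∈ Finset.range n, negMulLog (pv s)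
        = (n:ℝ) * ∑ s ∈ Finset.range n, (n:ℝ)⁻¹ * negMulLog (pv s) := by
          rw [Finset.mul_sum]
          refine Finset.sum_congr rfl fun s _ => ?_
          field_simp
      _ ≤ (n:ℝ) * negMulLog ((avgMeasure ν T 0 n (dynJoin T P ℓ ⁻¹' {v})).toReal) :=
          mul_le_mul_of_nonneg_left hJ hnR.le
  have key : (ℓ:ℝ) * partEnt ν (dynJoin T P n)
      ≤ n * partEnt (avgMeasure ν T 0 n) (dynJoin T P ℓ) + ℓ * (2 * ℓ * Real.log M) := by
    have := inj.trans conc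
    linarith [total]
  have e1 : (1/(n:ℝ)) * partEnt ν (dynJoin T P n)
      = ((ℓ:ℝ) * partEnt ν (dynJoin T P n)) / (ℓ * n) := by
    field_simp
  have e2 : (1 / (ℓ : ℝ)) * partEnt (avgMeasure ν T 0 n) (dynJoin T P ℓ)
        + (2 * ℓ / (n : ℝ)) * Real.log M
      = ((n:ℝ) * partEnt (avgMeasure ν T 0 n) (dynJoin T P ℓ)
          + ℓ * (2 * ℓ * Real.log M)) / (ℓ * n) := by
    field_simp
  rw [e1, e2]
  gcongr
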